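/- (Theorem 1, sharing part.) Let n ≥ 1, N = 2^n, let 2 ≤ i ≤ N, let z_i = ν₂(i−1) be the sharing factor of i, and let k be an integer with z_i < k ≤ n. Let u be a vector over ZMod 2 of length at least i−1 (the decoded bits), and let y ∈ ℝ^N. Then ⌈i/2^k⌉ = ⌈(i−1)/2^k⌉, and for every 1 ≤ j ≤ 2^k, h_{j,k}(u_1^{i−1}) = h_{j,k}(u_1^{i−2}); consequently, for every 1 ≤ j ≤ 2^k, L_{N/2^k}^{(⌈i/2^k⌉)}(y_seg_{j,k}, h_{j,k}(u_1^{i−1})) = L_{N/2^k}^{(⌈(i−1)/2^k⌉)}(y_seg_{j,k}, h_{j,k}(u_1^{i−2})). That is, when estimating bit i, all likelihood ratios at lengths N/2^k with k > z_i coincide with those already needed when estimating bit i−1, so only the likelihood ratios at lengths N, N/2, …, N/2^{z_i} need to be calculated. -/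

import Mathlib

/-- `pmap u` : componentwise XOR of odd-indexed and even-indexed subvectors
(1-based: component `a` is `u_{2a-1} + u_{2a}`); length `⌊l/2⌋`. -/
def pmap (u : List (ZMod 2)) : List (ZMod 2) :=
  List.ofFn fun t : Fin (u.length / 2) => u.getD (2 * (t : ℕ)) 0 + u.getD (2 * (t : ℕ) + 1) 0

/-- `qmap u` : the even-indexed subvector (1-based: component `a` is `u_{2a}`). -/
def qmap (u : List (ZMod 2)) : List (ZMod 2) :=
  List.ofFn fun t : Fin (u.length / 2) => u.getD (2 * (t : ℕ) + 1) 0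


lemma pmap_length (u : List (ZMod 2)) : (pmap u).length = u.length / 2 := by simp [pmap]
lemma qmap_length (u : List (ZMod 2)) : (qmap u).length = u.length / 2 := by simp [qmap]

lemma getD_take (v : List (ZMod 2)) (s t : ℕ) (h : t < s) :
    (v.take s).getD t 0 = v.getD t 0 := by
  simp [List.getD, List.getElem?_take, h]

lemma pmap_take (v : List (ZMod 2)) (s : ℕ) (hs : s ≤ v.length) :
    pmap (v.take s) = (pmap v).take (s / 2) := by
  have hl : (v.take s).length = s := by simp [Nat.min_eq_left hs]
  apply List.ext_getElem
  · simp [pmap_length, hl, Nat.min_eq_left (Nat.div_le_div_right hs)]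
  · intro t h1 h2
    have ht : t < s / 2 := by
      have := h1; rwa [pmap_length, hl] at this
    have h2t : 2 * t + 1 < s := by omega
    simp only [pmap, List.getElem_take, List.getElem_ofFn, Fin.coe_cast, Fin.val_mk, hl]
    rw [getD_take _ _ _ (by omega), getD_take _ _ _ h2t]

lemma qmap_take (v : List (ZMod 2)) (s : ℕ) (hs : s ≤ v.length) :
    qmap (v.take s) = (qmap v).take (s / 2) := by
  have hl : (v.take s).length = s := by simp [Nat.min_eq_left hs]
  apply List.ext_getElem
  · simp [qmap_length, hl, Nat.min_eq_left (Nat.div_le_div_right hs)]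
  · intro t h1 h2
    have ht : t < s / 2 := by
      have := h1; rwa [qmap_length, hl] at this
    have h2t : 2 * t + 1 < s := by omega
    simp only [qmap, List.getElem_take, List.getElem_ofFn, Fin.coe_cast, Fin.val_mk, hl]
    rw [getD_take _ _ _ h2t]

lemma foldl_step_length (c : ℕ → Bool) (L : List ℕ) (v : List (ZMod 2)) :
    (L.foldl (fun w a => if c a then qmap w else pmap w) v).length
      = v.length / 2 ^ L.length := by
  induction L generalizing v with
  | nil => simp
  | cons a L ih =>
    simp only [List.foldl_cons, List.length_cons, ih]
    have h : (if c a then qmap v else pmap v).length = v.length / 2 := by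
      split <;> simp [pmap_length, qmap_length]
    rw [h, Nat.div_div_eq_div_mul, pow_succ, mul_comm]

lemma foldl_step_take (c : ℕ → Bool) (L : List ℕ) (v : List (ZMod 2)) (s : ℕ)
    (hs : s ≤ v.length) :
    L.foldl (fun w a => if c a then qmap w else pmap w) (v.take s)
      = (L.foldl (fun w a => if c a then qmap w else pmap w) v).take (s / 2 ^ L.length) := by
  induction L generalizing v s with
  | nil => simp
  | cons a L ih =>
    simp only [List.foldl_cons, List.length_cons]
    have h1 : (if c a then qmap (v.take s) else pmap (v.take s))
        = (if c a then qmap v else pmap v).take (s / 2) := by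
      split
      · exact qmap_take v s hs
      · exact pmap_take v s hs
    rw [h1, ih _ _ (by split <;> simp [pmap_length, qmap_length, Nat.div_le_div_right hs]),
      Nat.div_div_eq_div_mul, pow_succ, mul_comm]

/-- `hmap j k = θ_k ∘ ⋯ ∘ θ_1`, where `θ_a = p` if `b_{k-a+1} = 0` and `θ_a = q`
if `b_{k-a+1} = 1`, with `b_k ⋯ b_1` the `k`-bit binary expansion of `j - 1`
(`b_1` least significant, i.e. `b_t` is bit `t-1`). -/
def hmap (j k : ℕ) (u : List (ZMod 2)) : List (ZMod 2) :=
  (List.range k).foldl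
    (fun v a => if Nat.testBit (j - 1) (k - 1 - a) then qmap v else pmap v) u

/-- The index set `D_{j,k,a}`. -/
def Dset (j k a : ℕ) : Finset ℕ :=
  ((Finset.range (2 ^ k)).filter fun c => (j - 1) &&& c = j - 1).image
    fun c => (a - 1) * 2 ^ k + 1 + c

noncomputable def fLR (a b : ℝ) : ℝ := (a * b + 1) / (a + b)

noncomputable def gLR (a b : ℝ) (s : ZMod 2) : ℝ := a ^ ((1 : ℤ) - 2 * (s.val : ℤ)) * b

/-- `LR n y i u` is the likelihood ratio `L_{2^n}^{(i)}(y, u)` (with `i` 1-based). -/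
noncomputable def LR : ℕ → List ℝ → ℕ → List (ZMod 2) → ℝ
  | 0, y, _, _ => y.getD 0 0
  | n + 1, y, i, u =>
      if i % 2 = 1 then
        fLR (LR n (y.take (2 ^ n)) ((i + 1) / 2) (pmap u))
            (LR n (y.drop (2 ^ n)) ((i + 1) / 2) (qmap u))
      else
        gLR (LR n (y.take (2 ^ n)) ((i + 1) / 2) (pmap u))
            (LR n (y.drop (2 ^ n)) ((i + 1) / 2) (qmap u))
            (u.getD (i - 2) 0)

/-- `yseg n k j y` : the segment `(y_{(j-1)·N/2^k+1}, …, y_{j·N/2^k})` of `y ∈ ℝ^{2^n}`. -/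
def yseg (n k j : ℕ) (y : List ℝ) : List ℝ :=
  (y.drop ((j - 1) * 2 ^ (n - k))).take (2 ^ (n - k))

/-- Theorem 1, sharing part. For `2 ≤ i ≤ N = 2^n`, sharing factor
`z_i = ν₂(i−1)` and `z_i < k ≤ n`: `⌈i/2^k⌉ = ⌈(i−1)/2^k⌉`,
`h_{j,k}(u_1^{i−1}) = h_{j,k}(u_1^{i−2})`, and hence the likelihood ratios at length
`N/2^k` needed for bit `i` coincide with those needed for bit `i−1`. -/
theorem stmt10 (n i k : ℕ) (hn : 1 ≤ n) (hi1 : 2 ≤ i) (hi2 : i ≤ 2 ^ n)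
    (hzk : padicValNat 2 (i - 1) < k) (hk : k ≤ n)
    (u : List (ZMod 2)) (hu : i - 1 ≤ u.length)
    (y : List ℝ) (hy : y.length = 2 ^ n) :
    (i + 2 ^ k - 1) / 2 ^ k = (i - 1 + 2 ^ k - 1) / 2 ^ k ∧
    (∀ j, 1 ≤ j → j ≤ 2 ^ k →
      hmap j k (u.take (i - 1)) = hmap j k (u.take (i - 2))) ∧
    (∀ j, 1 ≤ j → j ≤ 2 ^ k →
      LR (n - k) (yseg n k j y) ((i + 2 ^ k - 1) / 2 ^ k) (hmap j k (u.take (i - 1))) =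
      LR (n - k) (yseg n k j y) ((i - 1 + 2 ^ k - 1) / 2 ^ k)
        (hmap j k (u.take (i - 2)))) := by
  haveI : Fact (Nat.Prime 2) := ⟨Nat.prime_two⟩
  set m := i - 1 with hmdef
  have hm1 : 1 ≤ m := by omega
  have hndvd : ¬ (2 ^ k ∣ m) := by
    intro hd
    have := (padicValNat_dvd_iff_le (p := 2) (by omega : m ≠ 0)).mp hd
    omega
  have hkpos : 0 < 2 ^ k := pow_pos (by norm_num) k
  have hdiv : m / 2 ^ k = (m - 1) / 2 ^ k := by
    have he : m - 1 + 1 = m := by omega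
    conv_lhs => rw [← he]
    rw [Nat.succ_div, if_neg (by rwa [he]), add_zero]
  have p1 : (i + 2 ^ k - 1) / 2 ^ k = (i - 1 + 2 ^ k - 1) / 2 ^ k := by
    have e1 : i + 2 ^ k - 1 = m + 2 ^ k := by omega
    have e2 : i - 1 + 2 ^ k - 1 = (m - 1) + 2 ^ k := by omega
    rw [e1, e2, Nat.add_div_right _ hkpos, Nat.add_div_right _ hkpos, hdiv]
  have p2 : ∀ j, hmap j k (u.take (i - 1)) = hmap j k (u.take (i - 2)) := by
    intro j
    have hw : (u.take m).length = m := by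
      simp [Nat.min_eq_left hu]
    have htt : u.take (i - 2) = (u.take m).take (m - 1) := by
      rw [List.take_take]
      congr 1
      omega
    show hmap j k (u.take m) = _
    rw [htt]
    unfold hmap
    have key := foldl_step_take (fun a => Nat.testBit (j - 1) (k - 1 - a)) (List.range k)
      (u.take m) (m - 1) (by omega)
    rw [List.length_range] at key
    rw [key, ← hdiv]
    refine (List.take_of_length_le ?_).symm
    rw [foldl_step_length, hw, List.length_range]
  refine ⟨p1, fun j _ _ => p2 j, fun j _ _ => ?_⟩
  rw [p1, p2 j]
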